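/- arXiv:1810.06341 — 2 statements merged into one kernel-verified Lean document; each statement's English description precedes it below -/
import Mathlib

section
/- Let p be prime and X, Y ⊆ F_p with |X|·|Y| > 2p. Then 8(X·Y) = F_p, i.e. every element of F_p can be written as a sum of 8 products x₁y₁ + x₂y₂ + … + x₈y₈ with xᵢ ∈ X, yᵢ ∈ Y. -/
open Finset

/-- Cauchy–Schwarz for fibers of a map: `|s|² ≤ |image| * (number of collision pairs)`. -/
private lemma glib_cs_aux {α β : Type*} [DecidableEq α] [DecidableEq β] (s : Finset α)
    (f : α → β) :
    s.card ^ 2 ≤ (s.image f).card * ((s ×ˢ s).filter fun q => f q.1 = f q.2).card := by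
  classical
  have h1 : ∑ z ∈ s.image f, (s.filter fun a => f a = z).card = s.card :=
    (Finset.card_eq_sum_card_fiberwise fun x hx => Finset.mem_image_of_mem f hx).symm
  have h2 : ((s ×ˢ s).filter fun q => f q.1 = f q.2).card
      = ∑ z ∈ s.image f, ((s.filter fun a => f a = z).card) ^ 2 := by
    rw [Finset.card_eq_sum_card_fiberwise (f := fun q : α × α => f q.1) (t := s.image f)
      (fun q hq => Finset.mem_image_of_mem f
        (Finset.mem_product.mp (Finset.mem_filter.mp hq).1).1)]
    refine Finset.sum_congr rfl fun z _ => ?_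
    have hfz : (((s ×ˢ s).filter fun q => f q.1 = f q.2).filter fun q => f q.1 = z)
        = (s.filter fun a => f a = z) ×ˢ (s.filter fun a => f a = z) := by
      ext ⟨x, y⟩
      simp only [Finset.mem_filter, Finset.mem_product]
      constructor
      · rintro ⟨⟨⟨hx, hy⟩, hxy⟩, hz1⟩
        exact ⟨⟨hx, hz1⟩, hy, by rw [← hxy]; exact hz1⟩
      · rintro ⟨⟨hx, hz1⟩, hy, hz2⟩
        exact ⟨⟨⟨hx, hy⟩, by rw [hz1, hz2]⟩, hz1⟩
    rw [hfz, Finset.card_product, sq]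
  calc s.card ^ 2 = (∑ z ∈ s.image f, (1 : ℕ) * (s.filter fun a => f a = z).card) ^ 2 := by
        rw [← h1]; simp
    _ ≤ (∑ z ∈ s.image f, (1 : ℕ) ^ 2) *
          (∑ z ∈ s.image f, ((s.filter fun a => f a = z).card) ^ 2) :=
        Finset.sum_mul_sq_le_sq_mul_sq _ _ _
    _ = (s.image f).card * ((s ×ˢ s).filter fun q => f q.1 = f q.2).card := by
        rw [h2]; simp

/-- The key arithmetic inequality. -/
private lemma glib_arith (p a b : ℕ) (hp2 : 2 ≤ p) (hab : p + 1 ≤ a * b)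
    (ha : 1 ≤ a) (hb : 1 ≤ b) (hap : a ≤ p) (hbp : b ≤ p) :
    (p + 1) * ((p - 1) * (a * b) + (a * a - a) * (b * b - b)) ≤ 2 * (a * b) ^ 2 * (p - 1) := by
  have key : (p + 1) * ((p - 1) + (a - 1) * (b - 1)) ≤ 2 * (a * b) * (p - 1) := by
    rcases Nat.lt_or_ge p 3 with hp3 | hp3
    · -- p = 2, so a, b ≤ 2 and a*b ≥ 3 forces a = b = 2
      have hp2' : p = 2 := by omega
      subst hp2'
      interval_cases a <;> interval_cases b <;> omega
    · -- p ≥ 3 : work in ℤ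
      have hab3 : 3 ≤ a + b := by
        by_contra h
        push_neg at h
        have ha1 : a = 1 := by omega
        have hb1 : b = 1 := by omega
        rw [ha1, hb1] at hab; omega
      have h3 : (1:ℕ) ≤ p := by omega
      zify [ha, hb, h3]
      have h1 : (0:ℤ) ≤ ((p:ℤ) - 3) * ((a:ℤ) * b - (p:ℤ) - 1) := by
        apply mul_nonneg
        · have : (3:ℤ) ≤ p := by exact_mod_cast hp3
          linarith
        · have : (p:ℤ) + 1 ≤ (a:ℤ) * b := by exact_mod_cast hab
          linarith
      have h2' : (0:ℤ) ≤ ((p:ℤ) + 1) * ((a:ℤ) + b - 3) := by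
        apply mul_nonneg
        · positivity
        · have : (3:ℤ) ≤ (a:ℤ) + b := by exact_mod_cast hab3
          linarith
      have key2 : 2 * ((a:ℤ) * b) * ((p:ℤ) - 1)
          - ((p:ℤ) + 1) * (((p:ℤ) - 1) + ((a:ℤ) - 1) * ((b:ℤ) - 1))
          = ((p:ℤ) - 3) * ((a:ℤ) * b - (p:ℤ) - 1) + ((p:ℤ) + 1) * ((a:ℤ) + b - 3) := by
        ring
      linarith
  have e1 : a * a - a = a * (a - 1) := by
    cases a with
    | zero => rfl
    | succ n =>
      rw [Nat.succ_sub_one]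
      have h : (n + 1) * (n + 1) = (n + 1) * n + (n + 1) := by ring
      rw [h, Nat.add_sub_cancel]
  have e2 : b * b - b = b * (b - 1) := by
    cases b with
    | zero => rfl
    | succ n =>
      rw [Nat.succ_sub_one]
      have h : (n + 1) * (n + 1) = (n + 1) * n + (n + 1) := by ring
      rw [h, Nat.add_sub_cancel]
  calc (p + 1) * ((p - 1) * (a * b) + (a * a - a) * (b * b - b))
      = (a * b) * ((p + 1) * ((p - 1) + (a - 1) * (b - 1))) := by rw [e1, e2]; ring
    _ ≤ (a * b) * (2 * (a * b) * (p - 1)) := Nat.mul_le_mul_left _ key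
    _ = 2 * (a * b) ^ 2 * (p - 1) := by ring

/-- Covering lemma: two finsets whose sizes sum to more than `|K|` additively cover `K`. -/
private lemma glib_cover {K : Type*} [Fintype K] [DecidableEq K] [AddCommGroup K]
    (W₁ W₂ : Finset K) (h : Fintype.card K < W₁.card + W₂.card) (lam : K) :
    ∃ w₁ ∈ W₁, ∃ w₂ ∈ W₂, lam = w₁ + w₂ := by
  classical
  set W₂' := W₂.image fun w => lam - w with hW₂'
  have hinj : Function.Injective fun w : K => lam - w := fun x y hxy => by
    have : lam - x = lam - y := hxy
    have := sub_right_injective this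
    simpa using this
  have hcard : W₂'.card = W₂.card := Finset.card_image_of_injective _ hinj
  have hint : (W₁ ∩ W₂').Nonempty := by
    rw [← Finset.card_pos]
    have h1 : (W₁ ∪ W₂').card ≤ Fintype.card K := Finset.card_le_univ _
    have h2 := Finset.card_union_add_card_inter W₁ W₂'
    omega
  obtain ⟨z, hz⟩ := hint
  rw [Finset.mem_inter] at hz
  obtain ⟨w₂, hw₂, hz2⟩ := Finset.mem_image.mp hz.2
  refine ⟨z, hz.1, w₂, hw₂, ?_⟩
  rw [← hz2]
  abel

/-- Core counting lemma: if `|U||V| ≥ p+1` then there is `ξ ≠ 0` such that both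
"`U + ξV`" and "`U - ξV`" have at least `(p+1)/2` elements. -/
private lemma glib_core {p : ℕ} (hp : p.Prime) (U V : Finset (ZMod p))
    (hU : U.Nonempty) (hV : V.Nonempty) (hM : p + 1 ≤ U.card * V.card) :
    ∃ ξ : ZMod p, ξ ≠ 0 ∧
      p + 1 ≤ 2 * ((U ×ˢ V).image fun w => w.1 + ξ * w.2).card ∧
      p + 1 ≤ 2 * ((U ×ˢ V).image fun w => w.1 - ξ * w.2).card := by
  classical
  haveI : Fact p.Prime := ⟨hp⟩
  haveI : NeZero p := ⟨hp.ne_zero⟩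
  have hcardK : Fintype.card (ZMod p) = p := ZMod.card p
  have hp2 : 2 ≤ p := hp.two_le
  set a := U.card with ha_def
  set b := V.card with hb_def
  have ha : 1 ≤ a := Finset.card_pos.mpr hU
  have hb : 1 ≤ b := Finset.card_pos.mpr hV
  have hap : a ≤ p := by
    have := Finset.card_le_univ U
    rwa [hcardK] at this
  have hbp : b ≤ p := by
    have := Finset.card_le_univ V
    rwa [hcardK] at this
  -- the energy
  set T := (U ×ˢ U) ×ˢ (V ×ˢ V) with hT
  set E := fun ξ : ZMod p =>
    (T.filter fun q => q.1.1 + ξ * q.2.1 = q.1.2 + ξ * q.2.2).card with hE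
  -- Step A: sum of energies over ξ ≠ 0 is bounded
  have hswap : ∑ ξ ∈ (Finset.univ.erase (0 : ZMod p)), E ξ
      = ∑ q ∈ T, ((Finset.univ.erase (0 : ZMod p)).filter
          fun ξ => q.1.1 + ξ * q.2.1 = q.1.2 + ξ * q.2.2).card := by
    simp only [hE, Finset.card_filter]
    exact Finset.sum_comm
  have hqbound : ∀ u u' v v' : ZMod p,
      ((Finset.univ.erase (0 : ZMod p)).filter fun ξ => u + ξ * v = u' + ξ * v').card
        ≤ (if u = u' ∧ v = v' then p - 1 else 0)
          + (if ¬(u = u') ∧ ¬(v = v') then 1 else 0) := by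
    intro u u' v v'
    by_cases huu : u = u' <;> by_cases hvv : v = v'
    · subst huu; subst hvv
      have hrhs : (if u = u ∧ v = v then p - 1 else 0)
          + (if ¬(u = u) ∧ ¬(v = v) then 1 else 0) = p - 1 := by simp
      rw [hrhs]
      calc ((Finset.univ.erase (0 : ZMod p)).filter fun ξ => u + ξ * v = u + ξ * v).card
          ≤ (Finset.univ.erase (0 : ZMod p)).card := Finset.card_filter_le _ _
        _ = p - 1 := by
            rw [Finset.card_erase_of_mem (Finset.mem_univ _), Finset.card_univ, hcardK]
    · subst huu
      have hempty : ((Finset.univ.erase (0 : ZMod p)).filter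
          fun ξ => u + ξ * v = u + ξ * v') = ∅ := by
        apply Finset.filter_eq_empty_iff.mpr
        intro ξ hξ
        have hξ0 : ξ ≠ 0 := (Finset.mem_erase.mp hξ).1
        intro hcontra
        apply hvv
        have : ξ * v = ξ * v' := by linear_combination hcontra
        exact mul_left_cancel₀ hξ0 this
      rw [hempty]
      simp [hvv]
    · subst hvv
      have hempty : ((Finset.univ.erase (0 : ZMod p)).filter
          fun ξ => u + ξ * v = u' + ξ * v) = ∅ := by
        apply Finset.filter_eq_empty_iff.mpr
        intro ξ hξ hcontra
        exact huu (by linear_combination hcontra)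
      rw [hempty]
      simp [huu]
    · have hone : ((Finset.univ.erase (0 : ZMod p)).filter
          fun ξ => u + ξ * v = u' + ξ * v').card ≤ 1 := by
        apply Finset.card_le_one.mpr
        intro ξ hξ η hη
        have h1 := (Finset.mem_filter.mp hξ).2
        have h2 := (Finset.mem_filter.mp hη).2
        have hvne : v - v' ≠ 0 := sub_ne_zero.mpr hvv
        have : ξ * (v - v') = η * (v - v') := by linear_combination h1 - h2
        exact mul_right_cancel₀ hvne this
      have hrhs : (if u = u' ∧ v = v' then p - 1 else 0)
          + (if ¬(u = u') ∧ ¬(v = v') then 1 else 0) = 1 := by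
        simp [huu, hvv]
      rw [hrhs]
      exact hone
  have hdiag : ∀ S : Finset (ZMod p),
      ((S ×ˢ S).filter fun w : ZMod p × ZMod p => w.1 = w.2).card = S.card := by
    intro S
    have hset : ((S ×ˢ S).filter fun w : ZMod p × ZMod p => w.1 = w.2)
        = S.image fun u => (u, u) := by
      ext ⟨x, y⟩
      simp only [Finset.mem_filter, Finset.mem_product, Finset.mem_image, Prod.mk.injEq]
      constructor
      · rintro ⟨⟨hx, _⟩, hxy⟩
        exact ⟨x, hx, rfl, hxy⟩
      · rintro ⟨u, hu, rfl, rfl⟩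
        exact ⟨⟨hu, hu⟩, rfl⟩
    rw [hset]
    exact Finset.card_image_of_injective _ fun x y hxy => (Prod.mk.injEq _ _ _ _ ▸ hxy).1
  have hoffd : ∀ S : Finset (ZMod p),
      ((S ×ˢ S).filter fun w : ZMod p × ZMod p => ¬(w.1 = w.2)).card
        = S.card * S.card - S.card := by
    intro S
    have h1 := Finset.card_filter_add_card_filter_not
      (s := S ×ˢ S) (p := fun w : ZMod p × ZMod p => w.1 = w.2)
    rw [hdiag S, Finset.card_product] at h1
    omega
  have hsum_le : ∑ ξ ∈ (Finset.univ.erase (0 : ZMod p)), E ξ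
      ≤ (p - 1) * (a * b) + (a * a - a) * (b * b - b) := by
    rw [hswap]
    calc ∑ q ∈ T, ((Finset.univ.erase (0 : ZMod p)).filter
          fun ξ => q.1.1 + ξ * q.2.1 = q.1.2 + ξ * q.2.2).card
        ≤ ∑ q ∈ T, ((if q.1.1 = q.1.2 ∧ q.2.1 = q.2.2 then p - 1 else 0)
            + (if ¬(q.1.1 = q.1.2) ∧ ¬(q.2.1 = q.2.2) then 1 else 0)) := by
          apply Finset.sum_le_sum
          intro q _
          exact hqbound q.1.1 q.1.2 q.2.1 q.2.2
      _ = (p - 1) * (a * b) + (a * a - a) * (b * b - b) := by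
          rw [Finset.sum_add_distrib]
          congr 1
          · rw [← Finset.sum_filter]
            rw [hT, Finset.filter_product (fun w : ZMod p × ZMod p => w.1 = w.2)
              (fun w : ZMod p × ZMod p => w.1 = w.2)]
            rw [Finset.sum_const, Finset.card_product, hdiag U, hdiag V, smul_eq_mul, mul_comm]
          · rw [← Finset.sum_filter]
            rw [hT, Finset.filter_product (fun w : ZMod p × ZMod p => ¬(w.1 = w.2))
              (fun w : ZMod p × ZMod p => ¬(w.1 = w.2))]
            rw [Finset.sum_const, Finset.card_product, hoffd U, hoffd V, smul_eq_mul, mul_one]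
  -- Step B: pick ξ with small energy
  have hcard_erase : (Finset.univ.erase (0 : ZMod p)).card = p - 1 := by
    rw [Finset.card_erase_of_mem (Finset.mem_univ _), Finset.card_univ, hcardK]
  have hpick : ∃ ξ ∈ Finset.univ.erase (0 : ZMod p),
      (p - 1) * E ξ ≤ (p - 1) * (a * b) + (a * a - a) * (b * b - b) := by
    by_contra hcon
    push_neg at hcon
    set B := (p - 1) * (a * b) + (a * a - a) * (b * b - b) with hB
    have hall : ∀ ξ ∈ Finset.univ.erase (0 : ZMod p), B + 1 ≤ (p - 1) * E ξ := by
      intro ξ hξ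
      exact Nat.succ_le_of_lt (hcon ξ hξ)
    have hsum_ge : (Finset.univ.erase (0 : ZMod p)).card * (B + 1)
        ≤ ∑ ξ ∈ Finset.univ.erase (0 : ZMod p), (p - 1) * E ξ := by
      calc (Finset.univ.erase (0 : ZMod p)).card * (B + 1)
          = (Finset.univ.erase (0 : ZMod p)).card • (B + 1) := by rw [smul_eq_mul]
        _ ≤ ∑ ξ ∈ Finset.univ.erase (0 : ZMod p), (p - 1) * E ξ :=
            Finset.card_nsmul_le_sum _ _ _ hall
    rw [hcard_erase, ← Finset.mul_sum] at hsum_ge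
    have hmul := Nat.mul_le_mul_left (p - 1) hsum_le
    have hfin : (p - 1) * (B + 1) ≤ (p - 1) * B := le_trans hsum_ge hmul
    have hcanc := Nat.le_of_mul_le_mul_left hfin (by omega : 0 < p - 1)
    omega
  obtain ⟨ξ, hξmem, hξE⟩ := hpick
  have hξ0 : ξ ≠ 0 := (Finset.mem_erase.mp hξmem).1
  have hEpos : 0 < E ξ := by
    obtain ⟨u, hu⟩ := hU
    obtain ⟨v, hv⟩ := hV
    apply Finset.card_pos.mpr
    refine ⟨((u, u), (v, v)), Finset.mem_filter.mpr ⟨?_, rfl⟩⟩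
    rw [hT]
    exact Finset.mem_product.mpr ⟨Finset.mem_product.mpr ⟨hu, hu⟩,
      Finset.mem_product.mpr ⟨hv, hv⟩⟩
  -- Step C: Cauchy–Schwarz for both images
  have hbijP : (((U ×ˢ V) ×ˢ (U ×ˢ V)).filter fun q =>
      q.1.1 + ξ * q.1.2 = q.2.1 + ξ * q.2.2).card = E ξ := by
    apply Finset.card_nbij' (i := fun q => ((q.1.1, q.2.1), (q.1.2, q.2.2)))
      (j := fun q => ((q.1.1, q.2.1), (q.1.2, q.2.2)))
    · rintro ⟨⟨u, v⟩, ⟨u', v'⟩⟩ hq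
      simp only [hT, Finset.mem_coe, Finset.mem_filter, Finset.mem_product] at hq ⊢
      exact ⟨⟨⟨hq.1.1.1, hq.1.2.1⟩, ⟨hq.1.1.2, hq.1.2.2⟩⟩, hq.2⟩
    · rintro ⟨⟨u, u'⟩, ⟨v, v'⟩⟩ hq
      simp only [hT, Finset.mem_coe, Finset.mem_filter, Finset.mem_product] at hq ⊢
      exact ⟨⟨⟨hq.1.1.1, hq.1.2.1⟩, ⟨hq.1.1.2, hq.1.2.2⟩⟩, hq.2⟩
    · rintro ⟨⟨u, v⟩, ⟨u', v'⟩⟩ _; rfl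
    · rintro ⟨⟨u, u'⟩, ⟨v, v'⟩⟩ _; rfl
  have hbijM : (((U ×ˢ V) ×ˢ (U ×ˢ V)).filter fun q =>
      q.1.1 - ξ * q.1.2 = q.2.1 - ξ * q.2.2).card = E ξ := by
    apply Finset.card_nbij' (i := fun q => ((q.1.1, q.2.1), (q.2.2, q.1.2)))
      (j := fun q => ((q.1.1, q.2.2), (q.1.2, q.2.1)))
    · rintro ⟨⟨u, v⟩, ⟨u', v'⟩⟩ hq
      simp only [hT, Finset.mem_coe, Finset.mem_filter, Finset.mem_product] at hq ⊢
      exact ⟨⟨⟨hq.1.1.1, hq.1.2.1⟩, ⟨hq.1.2.2, hq.1.1.2⟩⟩, by linear_combination hq.2⟩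
    · rintro ⟨⟨u, u'⟩, ⟨v, v'⟩⟩ hq
      simp only [hT, Finset.mem_coe, Finset.mem_filter, Finset.mem_product] at hq ⊢
      exact ⟨⟨⟨hq.1.1.1, hq.1.2.2⟩, ⟨hq.1.1.2, hq.1.2.1⟩⟩, by linear_combination hq.2⟩
    · rintro ⟨⟨u, v⟩, ⟨u', v'⟩⟩ _; rfl
    · rintro ⟨⟨u, u'⟩, ⟨v, v'⟩⟩ _; rfl
  have hCSP : (a * b) ^ 2 ≤ ((U ×ˢ V).image fun w => w.1 + ξ * w.2).card * E ξ := by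
    have h := glib_cs_aux (U ×ˢ V) (fun w => w.1 + ξ * w.2)
    rw [Finset.card_product] at h
    rw [← hbijP]
    exact h
  have hCSM : (a * b) ^ 2 ≤ ((U ×ˢ V).image fun w => w.1 - ξ * w.2).card * E ξ := by
    have h := glib_cs_aux (U ×ˢ V) (fun w => w.1 - ξ * w.2)
    rw [Finset.card_product] at h
    rw [← hbijM]
    exact h
  -- Step D: conclude
  have harith := glib_arith p a b hp2 hM ha hb hap hbp
  refine ⟨ξ, hξ0, ?_, ?_⟩
  · have hchain : (p + 1) * ((p - 1) * E ξ)
        ≤ (2 * ((U ×ˢ V).image fun w => w.1 + ξ * w.2).card) * ((p - 1) * E ξ) := by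
      calc (p + 1) * ((p - 1) * E ξ)
          ≤ (p + 1) * ((p - 1) * (a * b) + (a * a - a) * (b * b - b)) :=
            Nat.mul_le_mul_left _ hξE
        _ ≤ 2 * (a * b) ^ 2 * (p - 1) := harith
        _ ≤ 2 * (((U ×ˢ V).image fun w => w.1 + ξ * w.2).card * E ξ) * (p - 1) :=
            Nat.mul_le_mul_right _ (Nat.mul_le_mul_left 2 hCSP)
        _ = (2 * ((U ×ˢ V).image fun w => w.1 + ξ * w.2).card) * ((p - 1) * E ξ) := by
            ring
    have hpos : 0 < (p - 1) * E ξ := Nat.mul_pos (by omega) hEpos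
    exact Nat.le_of_mul_le_mul_right hchain hpos
  · have hchain : (p + 1) * ((p - 1) * E ξ)
        ≤ (2 * ((U ×ˢ V).image fun w => w.1 - ξ * w.2).card) * ((p - 1) * E ξ) := by
      calc (p + 1) * ((p - 1) * E ξ)
          ≤ (p + 1) * ((p - 1) * (a * b) + (a * a - a) * (b * b - b)) :=
            Nat.mul_le_mul_left _ hξE
        _ ≤ 2 * (a * b) ^ 2 * (p - 1) := harith
        _ ≤ 2 * (((U ×ˢ V).image fun w => w.1 - ξ * w.2).card * E ξ) * (p - 1) :=
            Nat.mul_le_mul_right _ (Nat.mul_le_mul_left 2 hCSM)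
        _ = (2 * ((U ×ˢ V).image fun w => w.1 - ξ * w.2).card) * ((p - 1) * E ξ) := by
            ring
    have hpos : 0 < (p - 1) * E ξ := Nat.mul_pos (by omega) hEpos
    exact Nat.le_of_mul_le_mul_right hchain hpos

/-- Glibichuk's lemma: if `X, Y ⊆ 𝔽_p` with `|X||Y| > 2p`, then every element of
`𝔽_p` is a sum of 8 products `x₁y₁ + ⋯ + x₈y₈`, `xᵢ ∈ X`, `yᵢ ∈ Y`. -/
theorem glibichuk_eight_products (p : ℕ) (hp : p.Prime) (X Y : Finset (ZMod p))
    (hXY : 2 * p < X.card * Y.card) (lam : ZMod p) :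
    ∃ x y : Fin 8 → ZMod p, (∀ i, x i ∈ X) ∧ (∀ i, y i ∈ Y) ∧
      lam = ∑ i : Fin 8, x i * y i := by
  classical
  haveI : Fact p.Prime := ⟨hp⟩
  haveI : NeZero p := ⟨hp.ne_zero⟩
  have hcardK : Fintype.card (ZMod p) = p := ZMod.card p
  set Xs := X.filter (fun x => -x ∈ X) with hXsdef
  set Xa := X.filter (fun x => ¬(-x ∈ X)) with hXadef
  have hsplit : Xs.card + Xa.card = X.card :=
    Finset.card_filter_add_card_filter_not (p := fun x => -x ∈ X)
  have hY : Y.Nonempty := by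
    rw [← Finset.card_pos]
    by_contra h
    push_neg at h
    have hY0 : Y.card = 0 := by omega
    rw [hY0, Nat.mul_zero] at hXY
    omega
  have htot : Xs.card * Y.card + Xa.card * Y.card = X.card * Y.card := by
    rw [← add_mul, hsplit]
  have hcases : p + 1 ≤ Xs.card * Y.card ∨ p + 1 ≤ Xa.card * Y.card := by omega
  rcases hcases with hBig | hBig
  · -- CASE S : symmetric part is big
    have hXsne : Xs.Nonempty := by
      rw [← Finset.card_pos]
      rcases Nat.eq_zero_or_pos Xs.card with h | h
      · rw [h, zero_mul] at hBig; omega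
      · exact h
    obtain ⟨ξ, hξ0, himgP, _⟩ := glib_core hp Xs Y hXsne hY hBig
    -- a collision for the map (u, v) ↦ u + ξ v
    have hcoll : ∃ w₁ ∈ Xs ×ˢ Y, ∃ w₂ ∈ Xs ×ˢ Y, w₁ ≠ w₂ ∧
        w₁.1 + ξ * w₁.2 = w₂.1 + ξ * w₂.2 := by
      apply Finset.exists_ne_map_eq_of_card_lt_of_maps_to
        (t := (Finset.univ : Finset (ZMod p)))
      · rw [Finset.card_univ, hcardK, Finset.card_product]
        omega
      · exact fun w _ => Finset.mem_univ _
    obtain ⟨⟨u₁, v₁⟩, hm1, ⟨u₂, v₂⟩, hm2, hne, heq⟩ := hcoll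
    simp only at heq
    have hm1' := Finset.mem_product.mp hm1
    have hm2' := Finset.mem_product.mp hm2
    have hv12 : v₁ ≠ v₂ := by
      intro h
      apply hne
      subst h
      have : u₁ = u₂ := by linear_combination heq
      rw [this]
    have hc : v₂ - v₁ ≠ 0 := sub_ne_zero.mpr (Ne.symm hv12)
    have hrel : u₁ - u₂ = ξ * (v₂ - v₁) := by linear_combination heq
    -- the covering set W
    set W := ((Xs ×ˢ Y).image fun w => (v₂ - v₁) * w.1 + (u₁ - u₂) * w.2) with hWdef
    have hWeq : W = ((Xs ×ˢ Y).image fun w => w.1 + ξ * w.2).image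
        (fun z => (v₂ - v₁) * z) := by
      rw [Finset.image_image]
      apply Finset.image_congr
      intro w _
      simp only [Function.comp_apply]
      rw [hrel]
      ring
    have hWcard : p + 1 ≤ 2 * W.card := by
      rw [hWeq, Finset.card_image_of_injective _ (mul_right_injective₀ hc)]
      exact himgP
    obtain ⟨w₁, hw₁, w₂, hw₂, hlam⟩ := glib_cover W W (by rw [hcardK]; omega) lam
    obtain ⟨⟨x₁, y₁⟩, hxy₁, hw₁e⟩ := Finset.mem_image.mp hw₁
    obtain ⟨⟨x₂, y₂⟩, hxy₂, hw₂e⟩ := Finset.mem_image.mp hw₂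
    simp only at hw₁e hw₂e
    have hxy₁' := Finset.mem_product.mp hxy₁
    have hxy₂' := Finset.mem_product.mp hxy₂
    -- memberships
    have hx₁X : x₁ ∈ X := (Finset.mem_filter.mp hxy₁'.1).1
    have hx₁X' : -x₁ ∈ X := (Finset.mem_filter.mp hxy₁'.1).2
    have hx₂X : x₂ ∈ X := (Finset.mem_filter.mp hxy₂'.1).1
    have hx₂X' : -x₂ ∈ X := (Finset.mem_filter.mp hxy₂'.1).2
    have hu₁X : u₁ ∈ X := (Finset.mem_filter.mp hm1'.1).1
    have hu₂X' : -u₂ ∈ X := (Finset.mem_filter.mp hm2'.1).2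
    have hy₁Y : y₁ ∈ Y := hxy₁'.2
    have hy₂Y : y₂ ∈ Y := hxy₂'.2
    have hv₁Y : v₁ ∈ Y := hm1'.2
    have hv₂Y : v₂ ∈ Y := hm2'.2
    refine ⟨![x₁, -x₁, u₁, -u₂, x₂, -x₂, u₁, -u₂],
            ![v₂, v₁, y₁, y₁, v₂, v₁, y₂, y₂], ?_, ?_, ?_⟩
    · intro i
      fin_cases i <;> simp only [Matrix.cons_val_zero, Matrix.cons_val_one, Matrix.head_cons,
        Matrix.cons_val_two, Matrix.tail_cons, Matrix.cons_val_three, Matrix.cons_val_four,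
        Matrix.cons_val_succ] <;> assumption
    · intro i
      fin_cases i <;> simp only [Matrix.cons_val_zero, Matrix.cons_val_one, Matrix.head_cons,
        Matrix.cons_val_two, Matrix.tail_cons, Matrix.cons_val_three, Matrix.cons_val_four,
        Matrix.cons_val_succ] <;> assumption
    · simp only [Fin.sum_univ_succ, Fin.sum_univ_zero, Matrix.cons_val_zero,
        Matrix.cons_val_succ, add_zero]
      rw [hlam, ← hw₁e, ← hw₂e]
      ring
  · -- CASE A : antisymmetric part is big
    have hXane : Xa.Nonempty := by
      rw [← Finset.card_pos]
      rcases Nat.eq_zero_or_pos Xa.card with h | h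
      · rw [h, zero_mul] at hBig; omega
      · exact h
    obtain ⟨ξ, hξ0, himgP, himgM⟩ := glib_core hp Xa Y hXane hY hBig
    set S := ((Xa ×ˢ Y).image fun w => w.1 + ξ * w.2) with hSdef
    set S' := S.image (fun z => -z) with hS'def
    have hS'card : S'.card = S.card := Finset.card_image_of_injective _ neg_injective
    have hint : (S ∩ S').Nonempty := by
      rw [← Finset.card_pos]
      have h1 : (S ∪ S').card ≤ p :=
        le_of_le_of_eq (Finset.card_le_univ _) hcardK
      have h2 := Finset.card_union_add_card_inter S S'
      omega
    obtain ⟨z, hz⟩ := hint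
    rw [Finset.mem_inter] at hz
    obtain ⟨⟨u₁, v₁⟩, hm1, hz1⟩ := Finset.mem_image.mp hz.1
    obtain ⟨z₂, hz₂S, hz2⟩ := Finset.mem_image.mp hz.2
    obtain ⟨⟨u₂, v₂⟩, hm2, hz3⟩ := Finset.mem_image.mp hz₂S
    simp only at hz1 hz3
    have hm1' := Finset.mem_product.mp hm1
    have hm2' := Finset.mem_product.mp hm2
    have hrel0 : u₁ + ξ * v₁ = -(u₂ + ξ * v₂) := by
      linear_combination hz1 + hz3 - hz2
    have hu₁Xa := Finset.mem_filter.mp hm1'.1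
    have hu₂Xa := Finset.mem_filter.mp hm2'.1
    have hu12 : u₁ + u₂ ≠ 0 := by
      intro h
      apply hu₁Xa.2
      have : -u₁ = u₂ := by linear_combination -h
      rw [this]
      exact hu₂Xa.1
    have hv12 : v₁ + v₂ ≠ 0 := by
      intro h
      apply hu12
      have hξv : ξ * (v₁ + v₂) = 0 := by rw [h, mul_zero]
      linear_combination hrel0 - hξv
    have hrel : u₁ + u₂ = -(ξ * (v₁ + v₂)) := by linear_combination hrel0
    set W := ((Xa ×ˢ Y).image fun w => (v₁ + v₂) * w.1 + (u₁ + u₂) * w.2) with hWdef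
    have hWeq : W = ((Xa ×ˢ Y).image fun w => w.1 - ξ * w.2).image
        (fun z => (v₁ + v₂) * z) := by
      rw [Finset.image_image]
      apply Finset.image_congr
      intro w _
      simp only [Function.comp_apply]
      rw [hrel]
      ring
    have hWcard : p + 1 ≤ 2 * W.card := by
      rw [hWeq, Finset.card_image_of_injective _ (mul_right_injective₀ hv12)]
      exact himgM
    obtain ⟨w₁, hw₁, w₂, hw₂, hlam⟩ := glib_cover W W (by rw [hcardK]; omega) lam
    obtain ⟨⟨x₁, y₁⟩, hxy₁, hw₁e⟩ := Finset.mem_image.mp hw₁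
    obtain ⟨⟨x₂, y₂⟩, hxy₂, hw₂e⟩ := Finset.mem_image.mp hw₂
    simp only at hw₁e hw₂e
    have hxy₁' := Finset.mem_product.mp hxy₁
    have hxy₂' := Finset.mem_product.mp hxy₂
    have hx₁X : x₁ ∈ X := (Finset.mem_filter.mp hxy₁'.1).1
    have hx₂X : x₂ ∈ X := (Finset.mem_filter.mp hxy₂'.1).1
    have hu₁X : u₁ ∈ X := hu₁Xa.1
    have hu₂X : u₂ ∈ X := hu₂Xa.1
    have hy₁Y : y₁ ∈ Y := hxy₁'.2
    have hy₂Y : y₂ ∈ Y := hxy₂'.2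
    have hv₁Y : v₁ ∈ Y := hm1'.2
    have hv₂Y : v₂ ∈ Y := hm2'.2
    refine ⟨![x₁, x₁, u₁, u₂, x₂, x₂, u₁, u₂],
            ![v₁, v₂, y₁, y₁, v₁, v₂, y₂, y₂], ?_, ?_, ?_⟩
    · intro i
      fin_cases i <;> simp only [Matrix.cons_val_zero, Matrix.cons_val_one, Matrix.head_cons,
        Matrix.cons_val_two, Matrix.tail_cons, Matrix.cons_val_three, Matrix.cons_val_four,
        Matrix.cons_val_succ] <;> assumption
    · intro i
      fin_cases i <;> simp only [Matrix.cons_val_zero, Matrix.cons_val_one, Matrix.head_cons,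
        Matrix.cons_val_two, Matrix.tail_cons, Matrix.cons_val_three, Matrix.cons_val_four,
        Matrix.cons_val_succ] <;> assumption
    · simp only [Fin.sum_univ_succ, Fin.sum_univ_zero, Matrix.cons_val_zero,
        Matrix.cons_val_succ, add_zero]
      rw [hlam, ← hw₁e, ← hw₂e]
      ring
end

section
/- Let p be prime, g of multiplicative order T mod p, a coprime to p, and N, M intervals of consecutive integers with complex coefficients α_n, β_m satisfying |α_n|, |β_m| ≤ 1. Then |Σ_{n∈N} Σ_{m∈M} α_n β_m e_p(a n g^m)|² ≤ C · M N · Σ_{0 ≤ n ≤ N} | Σ_{m∈M} e_p(a n g^m) | for an absolute constant C. -/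
open Finset

/-- The additive character `e_p(x) = e^{2πix/p}` on `ZMod p`. -/
noncomputable def ep (p : ℕ) (x : ZMod p) : ℂ :=
  Complex.exp (2 * Real.pi * Complex.I * (x.val : ℂ) / p)

lemma ep_eq (p : ℕ) (x : ZMod p) :
    ep p x = Complex.exp (((2 * Real.pi * x.val / p : ℝ) : ℂ) * Complex.I) := by
  unfold ep
  congr 1
  push_cast
  ring

lemma ep_abs (p : ℕ) (x : ZMod p) : norm (ep p x) = 1 := by
  rw [ep_eq]; exact Complex.norm_exp_ofReal_mul_I _

lemma ep_eq' (p : ℕ) (x : ZMod p) :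
    ep p x = Complex.exp ((x.val : ℂ) * (2 * Real.pi * Complex.I / p)) := by
  unfold ep; congr 1; ring

lemma ep_add {p : ℕ} (hp : p ≠ 0) (x y : ZMod p) :
    ep p (x + y) = ep p x * ep p y := by
  haveI : NeZero p := ⟨hp⟩
  have hpne : (p : ℂ) ≠ 0 := by exact_mod_cast hp
  have hk : x.val + y.val = (x + y).val + p * ((x.val + y.val) / p) := by
    rw [ZMod.val_add]; exact (Nat.mod_add_div _ _).symm
  rw [ep_eq', ep_eq', ep_eq', ← Complex.exp_add, ← add_mul]
  have hkc : ((x.val : ℂ) + y.val) = ((x + y).val : ℂ) + p * ((x.val + y.val) / p : ℕ) := by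
    exact_mod_cast congrArg (Nat.cast : ℕ → ℂ) hk
  rw [hkc, add_mul, Complex.exp_add]
  have : (↑p : ℂ) * ↑((x.val + y.val) / p) * (2 * ↑Real.pi * Complex.I / ↑p)
      = ↑((x.val + y.val) / p) * (2 * ↑Real.pi * Complex.I) := by
    field_simp
  rw [this, Complex.exp_nat_mul_two_pi_mul_I, mul_one]

lemma ep_neg {p : ℕ} (hp : p ≠ 0) (x : ZMod p) :
    ep p (-x) = (starRingEnd ℂ) (ep p x) := by
  haveI : NeZero p := ⟨hp⟩
  have h1 : ep p (-x) * ep p x = 1 := by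
    rw [← ep_add hp]
    simp [ep]
  have h2 : ep p (-x) = (ep p x)⁻¹ := eq_inv_of_mul_eq_one_left h1
  rw [h2, ← Complex.inv_eq_conj (ep_abs p x)]

/-- reduction of weighted bilinear sums to the unweighted sum via Cauchy–Schwarz:
`|Σ_{n∈N} Σ_{m∈M} α_n β_m e_p(a n g^m)|² ≤ C·MN·Σ_{0≤n≤N} |Σ_{m∈M} e_p(a n g^m)|`. -/
theorem bilinear_reduction :
    ∃ C : ℝ, 0 < C ∧
      ∀ (p : ℕ), p.Prime → ∀ (g : (ZMod p)ˣ) (a : ZMod p), a ≠ 0 →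
        ∀ (u v : ℤ) (N M : ℕ), N ≤ p → M ≤ orderOf g →
        ∀ (α β : ℤ → ℂ),
          (∀ n ∈ Finset.Icc (u + 1) (u + (N : ℤ)), norm (α n) ≤ 1) →
          (∀ m ∈ Finset.Icc (v + 1) (v + (M : ℤ)), norm (β m) ≤ 1) →
          (norm (∑ n ∈ Finset.Icc (u + 1) (u + (N : ℤ)),
              ∑ m ∈ Finset.Icc (v + 1) (v + (M : ℤ)),
                α n * β m * ep p (a * (n : ZMod p) * ((g ^ m : (ZMod p)ˣ) : ZMod p)))) ^ 2
            ≤ C * M * N *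
              ∑ n ∈ Finset.Icc (0 : ℤ) (N : ℤ),
                norm (∑ m ∈ Finset.Icc (v + 1) (v + (M : ℤ)),
                  ep p (a * (n : ZMod p) * ((g ^ m : (ZMod p)ˣ) : ZMod p))) := by
  refine ⟨2, two_pos, ?_⟩
  intro p hp g a ha u v N M hN hM α β hα hβ
  have hp0 : p ≠ 0 := hp.pos.ne'
  haveI : NeZero p := ⟨hp0⟩
  set I : Finset ℤ := Finset.Icc (u + 1) (u + (N : ℤ)) with hI
  set J : Finset ℤ := Finset.Icc (v + 1) (v + (M : ℤ)) with hJ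
  set e : ℤ → ℤ → ℂ :=
    fun n m => ep p (a * (n : ZMod p) * ((g ^ m : (ZMod p)ˣ) : ZMod p)) with he
  set F : ℤ → ℝ := fun k => norm (∑ m ∈ J, e k m) with hF
  set T : ℤ → ℂ := fun m => ∑ n ∈ I, α n * e n m with hT
  have hFnn : ∀ k, 0 ≤ F k := fun k => norm_nonneg _
  have hcardI : (I.card : ℝ) = N := by
    rw [hI, Int.card_Icc]; norm_num
  have hcardJ : (J.card : ℝ) = M := by
    rw [hJ, Int.card_Icc]; norm_num
  -- key character identity
  have key : ∀ (n n' m : ℤ), e n m * (starRingEnd ℂ) (e n' m) = e (n - n') m := by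
    intro n n' m
    rw [he]
    simp only
    rw [← ep_neg hp0, ← ep_add hp0]
    congr 1
    push_cast
    ring
  -- conjugation symmetry of F
  have hFneg : ∀ k : ℤ, F (-k) = F k := by
    intro k
    rw [hF]
    simp only
    have h1 : ∀ m ∈ J, e (-k) m = (starRingEnd ℂ) (e k m) := by
      intro m _
      rw [he]
      simp only
      rw [← ep_neg hp0]
      congr 1
      push_cast
      ring
    rw [Finset.sum_congr rfl h1, ← map_sum, Complex.norm_conj]
  -- Step A+B : abs S ≤ ∑_{m∈J} abs (T m)
  have stepAB : norm (∑ n ∈ I, ∑ m ∈ J, α n * β m * e n m)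
      ≤ ∑ m ∈ J, norm (T m) := by
    rw [Finset.sum_comm]
    have : ∀ m ∈ J, (∑ n ∈ I, α n * β m * e n m) = β m * T m := by
      intro m _
      rw [hT]
      simp only
      rw [Finset.mul_sum]
      exact Finset.sum_congr rfl fun n _ => by ring
    rw [Finset.sum_congr rfl this]
    refine le_trans (norm_sum_le _ _) (Finset.sum_le_sum fun m hm => ?_)
    rw [norm_mul]
    calc norm (β m) * norm (T m)
        ≤ 1 * norm (T m) :=
          mul_le_mul_of_nonneg_right (hβ m hm) (norm_nonneg _)
      _ = norm (T m) := one_mul _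
  -- Step C : Cauchy–Schwarz
  have stepC : (∑ m ∈ J, norm (T m)) ^ 2
      ≤ (M : ℝ) * ∑ m ∈ J, norm (T m) ^ 2 := by
    have h := sum_mul_sq_le_sq_mul_sq J (fun _ => (1 : ℝ)) (fun m => norm (T m))
    simpa [hcardJ] using h
  -- Step D : expand square
  have stepD : ∑ m ∈ J, norm (T m) ^ 2 ≤ ∑ n ∈ I, ∑ n' ∈ I, F (n - n') := by
    have hexp : (∑ m ∈ J, (T m * (starRingEnd ℂ) (T m)))
        = ∑ n ∈ I, ∑ n' ∈ I, (α n * (starRingEnd ℂ) (α n') * ∑ m ∈ J, e (n - n') m) := by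
      have h1 : ∀ m ∈ J, T m * (starRingEnd ℂ) (T m)
          = ∑ n ∈ I, ∑ n' ∈ I, α n * (starRingEnd ℂ) (α n') * e (n - n') m := by
        intro m _
        rw [hT]
        simp only [map_sum]
        rw [Finset.sum_mul_sum]
        refine Finset.sum_congr rfl fun n _ => Finset.sum_congr rfl fun n' _ => ?_
        rw [map_mul, ← key n n' m]
        ring
      rw [Finset.sum_congr rfl h1, Finset.sum_comm]
      refine Finset.sum_congr rfl fun n _ => ?_
      rw [Finset.sum_comm]
      refine Finset.sum_congr rfl fun n' _ => ?_
      rw [Finset.mul_sum]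
    have h2 : (∑ m ∈ J, norm (T m) ^ 2)
        = (∑ n ∈ I, ∑ n' ∈ I, (α n * (starRingEnd ℂ) (α n') * ∑ m ∈ J, e (n - n') m)).re := by
      rw [← hexp, Complex.re_sum]
      refine Finset.sum_congr rfl fun m _ => ?_
      rw [Complex.mul_conj, Complex.sq_norm]
      simp
    rw [h2]
    refine le_trans (Complex.re_le_norm _) ?_
    refine le_trans (norm_sum_le _ _) (Finset.sum_le_sum fun n hn => ?_)
    refine le_trans (norm_sum_le _ _) (Finset.sum_le_sum fun n' hn' => ?_)
    rw [norm_mul, norm_mul, Complex.norm_conj]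
    calc norm (α n) * norm (α n') * norm (∑ m ∈ J, e (n - n') m)
        ≤ 1 * 1 * norm (∑ m ∈ J, e (n - n') m) := by
          refine mul_le_mul_of_nonneg_right ?_ (norm_nonneg _)
          exact mul_le_mul (hα n hn) (hα n' hn') (norm_nonneg _) zero_le_one
      _ = F (n - n') := by rw [one_mul, one_mul]
  -- Step E : diagonal counting
  have stepE : (∑ n ∈ I, ∑ n' ∈ I, F (n - n'))
      ≤ (N : ℝ) * (2 * ∑ k ∈ Finset.Icc (0 : ℤ) (N : ℤ), F k) := by
    have inner : ∀ n ∈ I, (∑ n' ∈ I, F (n - n'))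
        ≤ ∑ k ∈ Finset.Icc (-(N : ℤ)) (N : ℤ), F k := by
      intro n hn
      have hinj : Set.InjOn (fun x : ℤ => n - x) I := fun x _ y _ h => by simp only at h; omega
      rw [← Finset.sum_image (f := F) (g := fun x : ℤ => n - x) (fun x hx y hy h => hinj hx hy h)]
      refine Finset.sum_le_sum_of_subset_of_nonneg ?_ (fun k _ _ => hFnn k)
      intro k hk
      simp only [Finset.mem_image, hI, Finset.mem_Icc] at hk ⊢
      rw [hI, Finset.mem_Icc] at hn
      omega
    have hsum1 : (∑ n ∈ I, ∑ n' ∈ I, F (n - n'))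
        ≤ ∑ n ∈ I, ∑ k ∈ Finset.Icc (-(N : ℤ)) (N : ℤ), F k :=
      Finset.sum_le_sum inner
    have hsplit : (∑ k ∈ Finset.Icc (-(N : ℤ)) (N : ℤ), F k)
        ≤ 2 * ∑ k ∈ Finset.Icc (0 : ℤ) (N : ℤ), F k := by
      have hunion : Finset.Icc (-(N : ℤ)) (N : ℤ)
          = Finset.Icc (-(N : ℤ)) (-1) ∪ Finset.Icc (0 : ℤ) (N : ℤ) := by
        ext k; simp only [Finset.mem_union, Finset.mem_Icc]; omega
      have hdisj : Disjoint (Finset.Icc (-(N : ℤ)) (-1)) (Finset.Icc (0 : ℤ) (N : ℤ)) := by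
        rw [Finset.disjoint_left]
        intro k hk hk'
        simp only [Finset.mem_Icc] at hk hk'
        omega
      rw [hunion, Finset.sum_union hdisj]
      have himg : Finset.Icc (-(N : ℤ)) (-1) = (Finset.Icc (1 : ℤ) (N : ℤ)).image Neg.neg := by
        ext k
        simp only [Finset.mem_image, Finset.mem_Icc]
        constructor
        · intro hk; exact ⟨-k, by omega, by omega⟩
        · rintro ⟨x, hx, rfl⟩; omega
      have hneg : (∑ k ∈ Finset.Icc (-(N : ℤ)) (-1), F k)
          = ∑ k ∈ Finset.Icc (1 : ℤ) (N : ℤ), F k := by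
        rw [himg, Finset.sum_image (fun x _ y _ h => neg_injective h)]
        exact Finset.sum_congr rfl fun k _ => hFneg k
      rw [hneg]
      have hsub : (∑ k ∈ Finset.Icc (1 : ℤ) (N : ℤ), F k)
          ≤ ∑ k ∈ Finset.Icc (0 : ℤ) (N : ℤ), F k := by
        refine Finset.sum_le_sum_of_subset_of_nonneg ?_ (fun k _ _ => hFnn k)
        intro k hk
        simp only [Finset.mem_Icc] at hk ⊢
        omega
      linarith
    calc (∑ n ∈ I, ∑ n' ∈ I, F (n - n'))
        ≤ ∑ n ∈ I, ∑ k ∈ Finset.Icc (-(N : ℤ)) (N : ℤ), F k := hsum1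
      _ = (I.card : ℝ) * ∑ k ∈ Finset.Icc (-(N : ℤ)) (N : ℤ), F k := by
          rw [Finset.sum_const, nsmul_eq_mul]
      _ ≤ (N : ℝ) * (2 * ∑ k ∈ Finset.Icc (0 : ℤ) (N : ℤ), F k) := by
          rw [hcardI]
          exact mul_le_mul_of_nonneg_left hsplit (Nat.cast_nonneg N)
  -- combine
  have habsnn : 0 ≤ norm (∑ n ∈ I, ∑ m ∈ J, α n * β m * e n m) := norm_nonneg _
  have hTsq : ∀ m, 0 ≤ norm (T m) ^ 2 := fun m => sq_nonneg _
  calc (norm (∑ n ∈ I, ∑ m ∈ J, α n * β m * e n m)) ^ 2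
      ≤ (∑ m ∈ J, norm (T m)) ^ 2 := by
        refine pow_le_pow_left₀ habsnn stepAB 2
    _ ≤ (M : ℝ) * ∑ m ∈ J, norm (T m) ^ 2 := stepC
    _ ≤ (M : ℝ) * ∑ n ∈ I, ∑ n' ∈ I, F (n - n') :=
        mul_le_mul_of_nonneg_left stepD (Nat.cast_nonneg M)
    _ ≤ (M : ℝ) * ((N : ℝ) * (2 * ∑ k ∈ Finset.Icc (0 : ℤ) (N : ℤ), F k)) :=
        mul_le_mul_of_nonneg_left stepE (Nat.cast_nonneg M)
    _ = 2 * (M : ℝ) * (N : ℝ) * ∑ k ∈ Finset.Icc (0 : ℤ) (N : ℤ), F k := by ring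
end
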